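/- Let Γ : ℝ → ℝ^d be continuously differentiable, n₁, n₂ ≥ 1, and let i = (i₁,…,i_{n₁}), j = (j₁,…,j_{n₂}) be words with letters in {1,…,d}. Then for all real s, t the shuffle identity holds: Γ^{n₁}_{ts}(i₁,…,i_{n₁}) · Γ^{n₂}_{ts}(j₁,…,j_{n₂}) = Σ_{k ∈ Sh(i,j)} Γ^{n₁+n₂}_{ts}(k₁,…,k_{n₁+n₂}), where Sh(i,j) is the set of words of length n₁+n₂ obtained by interleaving i and j, i.e. indexed by the subsets S ⊆ {1,…,n₁+n₂} of cardinality n₁, with the letters of i placed in order at the positions of S and the letters of j placed in order at the complementary positions. -/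

import Mathlib

open MeasureTheory intervalIntegral

/-- Iterated integrals of a path `Γ : ℝ → ℝ^d`:
`iter Γ 0 i s t = 1` and
`iter Γ (n+1) i s t = ∫_s^t Γ'_{i 0}(u) · iter Γ n (tail of i) s u du`. -/
noncomputable def iter {d : ℕ} (Γ : ℝ → Fin d → ℝ) : ℕ → (ℕ → Fin d) → ℝ → ℝ → ℝ
  | 0, _, _, _ => 1
  | n + 1, i, s, t =>
      ∫ u in s..t, deriv (fun v => Γ v (i 0)) u * iter Γ n (fun k => i (k + 1)) s u

/-- The word obtained by interleaving the word `i` (placed, in order, at the positions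
belonging to `S`) with the word `j` (placed, in order, at the complementary positions). -/
def shuffleWord {d : ℕ} (i j : ℕ → Fin d) (S : Finset ℕ) : ℕ → Fin d :=
  fun p => if p ∈ S then i ((Finset.range p).filter (· ∈ S)).card
           else j ((Finset.range p).filter (· ∉ S)).card

section Aux

variable {d : ℕ} {Γ : ℝ → Fin d → ℝ}

lemma iter_congr : ∀ (n : ℕ) {i i' : ℕ → Fin d}, (∀ k < n, i k = i' k) → ∀ (s t : ℝ),
    iter Γ n i s t = iter Γ n i' s t
  | 0, _, _, _, _, _ => rfl
  | n + 1, i, i', h, s, t => by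
    simp only [iter]
    rw [h 0 n.succ_pos]
    congr 1
    funext u
    rw [iter_congr n (fun k hk => h (k + 1) (by omega)) s u]

lemma iter_self_eq_zero (n : ℕ) (i : ℕ → Fin d) (s : ℝ) :
    iter Γ (n + 1) i s s = 0 := by
  simp [iter]

lemma iter_continuous (hΓ : ∀ l : Fin d, ContDiff ℝ 1 (fun v => Γ v l)) :
    ∀ (n : ℕ) (i : ℕ → Fin d) (s : ℝ), Continuous (iter Γ n i s)
  | 0, _, _ => continuous_const
  | n + 1, i, s => by
    have hcont : Continuous fun u =>
        deriv (fun v => Γ v (i 0)) u * iter Γ n (fun k => i (k + 1)) s u :=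
      ((hΓ (i 0)).continuous_deriv le_rfl).mul (iter_continuous hΓ n _ s)
    have : iter Γ (n + 1) i s = fun t => ∫ u in s..t,
        deriv (fun v => Γ v (i 0)) u * iter Γ n (fun k => i (k + 1)) s u := by
      funext t; simp [iter]
    rw [this]
    exact intervalIntegral.continuous_primitive
      (fun a b => hcont.intervalIntegrable a b) s

lemma iter_hasDerivAt (hΓ : ∀ l : Fin d, ContDiff ℝ 1 (fun v => Γ v l))
    (n : ℕ) (i : ℕ → Fin d) (s t : ℝ) :
    HasDerivAt (iter Γ (n + 1) i s)
      (deriv (fun v => Γ v (i 0)) t * iter Γ n (fun k => i (k + 1)) s t) t := by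
  have hcont : Continuous fun u =>
      deriv (fun v => Γ v (i 0)) u * iter Γ n (fun k => i (k + 1)) s u :=
    ((hΓ (i 0)).continuous_deriv le_rfl).mul (iter_continuous hΓ n _ s)
  have : iter Γ (n + 1) i s = fun t => ∫ u in s..t,
      deriv (fun v => Γ v (i 0)) u * iter Γ n (fun k => i (k + 1)) s u := by
    funext t; simp [iter]
  rw [this]
  exact intervalIntegral.integral_hasDerivAt_right (hcont.intervalIntegrable s t)
    (hcont.stronglyMeasurableAtFilter _ _) hcont.continuousAt

lemma card_filter_range_succ (q : ℕ → Prop) [DecidablePred q] (p : ℕ) :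
    ((Finset.range (p + 1)).filter q).card
      = (if q 0 then 1 else 0) + ((Finset.range p).filter (fun m => q (m + 1))).card := by
  have h : Finset.range (p + 1) = insert 0 ((Finset.range p).image (· + 1)) := by
    ext m
    simp only [Finset.mem_range, Finset.mem_insert, Finset.mem_image]
    constructor
    · intro hm
      rcases Nat.eq_zero_or_pos m with rfl | hpos
      · exact Or.inl rfl
      · exact Or.inr ⟨m - 1, by omega, by omega⟩
    · rintro (rfl | ⟨x, hx, hxe⟩) <;> omega
  have himg : ((Finset.range p).image (· + 1)).filter q
      = ((Finset.range p).filter (fun m => q (m + 1))).image (· + 1) := by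
    ext x
    simp only [Finset.mem_filter, Finset.mem_image, Finset.mem_range]
    constructor
    · rintro ⟨⟨m, hm, rfl⟩, hq⟩
      exact ⟨m, ⟨hm, hq⟩, rfl⟩
    · rintro ⟨m, ⟨hm, hq⟩, rfl⟩
      exact ⟨⟨m, hm, rfl⟩, hq⟩
  have hcard : (((Finset.range p).image (· + 1)).filter q).card
      = ((Finset.range p).filter (fun m => q (m + 1))).card := by
    rw [himg, Finset.card_image_of_injective _ (fun x y h => by omega)]
  rw [h, Finset.filter_insert]
  by_cases h0 : q 0
  · rw [if_pos h0, if_pos h0, Finset.card_insert_of_notMem (by simp [himg]), hcard]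
    omega
  · rw [if_neg h0, if_neg h0, hcard, zero_add]

lemma shuffleWord_zero_mem {i j : ℕ → Fin d} {S : Finset ℕ} (h0 : (0 : ℕ) ∈ S) :
    shuffleWord i j S 0 = i 0 := by
  simp [shuffleWord, h0]

lemma shuffleWord_zero_not_mem {i j : ℕ → Fin d} {S : Finset ℕ} (h0 : (0 : ℕ) ∉ S) :
    shuffleWord i j S 0 = j 0 := by
  simp [shuffleWord, h0]

lemma shuffleWord_succ_mem {i j : ℕ → Fin d} {S T : Finset ℕ} (h0 : (0 : ℕ) ∈ S)
    (hT : ∀ k, k ∈ T ↔ k + 1 ∈ S) (p : ℕ) :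
    shuffleWord i j S (p + 1) = shuffleWord (fun m => i (m + 1)) j T p := by
  have hfil : (Finset.range p).filter (fun m => m + 1 ∈ S)
      = (Finset.range p).filter (· ∈ T) :=
    Finset.filter_congr (fun m _ => by simp [hT])
  have hfil' : (Finset.range p).filter (fun m => ¬ (m + 1 ∈ S))
      = (Finset.range p).filter (· ∉ T) :=
    Finset.filter_congr (fun m _ => by simp [hT])
  unfold shuffleWord
  by_cases hp : p + 1 ∈ S
  · rw [if_pos hp, if_pos ((hT p).mpr hp)]
    rw [card_filter_range_succ (· ∈ S), if_pos h0]
    simp only []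
    rw [hfil]
    congr 1
    omega
  · rw [if_neg hp, if_neg (fun h => hp ((hT p).mp h))]
    rw [card_filter_range_succ (· ∉ S)]
    simp only [h0, not_true_eq_false, if_false, zero_add]
    rw [hfil']

lemma shuffleWord_succ_not_mem {i j : ℕ → Fin d} {S T : Finset ℕ} (h0 : (0 : ℕ) ∉ S)
    (hT : ∀ k, k ∈ T ↔ k + 1 ∈ S) (p : ℕ) :
    shuffleWord i j S (p + 1) = shuffleWord i (fun m => j (m + 1)) T p := by
  have hfil : (Finset.range p).filter (fun m => m + 1 ∈ S)
      = (Finset.range p).filter (· ∈ T) :=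
    Finset.filter_congr (fun m _ => by simp [hT])
  have hfil' : (Finset.range p).filter (fun m => ¬ (m + 1 ∈ S))
      = (Finset.range p).filter (· ∉ T) :=
    Finset.filter_congr (fun m _ => by simp [hT])
  unfold shuffleWord
  by_cases hp : p + 1 ∈ S
  · rw [if_pos hp, if_pos ((hT p).mpr hp)]
    rw [card_filter_range_succ (· ∈ S)]
    simp only [h0, if_false, zero_add]
    rw [hfil]
  · rw [if_neg hp, if_neg (fun h => hp ((hT p).mp h))]
    rw [card_filter_range_succ (· ∉ S)]
    simp only [h0, not_false_eq_true, if_true]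
    rw [hfil']
    congr 1
    omega

lemma mem_shiftDown_of_mem {S : Finset ℕ} (h0 : (0 : ℕ) ∈ S) (k : ℕ) :
    k ∈ ((S.erase 0).image (· - 1)) ↔ k + 1 ∈ S := by
  simp only [Finset.mem_image, Finset.mem_erase]
  constructor
  · rintro ⟨m, ⟨hm0, hmS⟩, rfl⟩
    have : m - 1 + 1 = m := by omega
    rwa [this]
  · intro hk
    exact ⟨k + 1, ⟨by omega, hk⟩, by omega⟩

lemma mem_shiftDown_of_not_mem {S : Finset ℕ} (h0 : (0 : ℕ) ∉ S) (k : ℕ) :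
    k ∈ (S.image (· - 1)) ↔ k + 1 ∈ S := by
  simp only [Finset.mem_image]
  constructor
  · rintro ⟨m, hmS, rfl⟩
    have hm0 : m ≠ 0 := fun h => h0 (h ▸ hmS)
    have : m - 1 + 1 = m := by omega
    rwa [this]
  · intro hk
    exact ⟨k + 1, hk, by omega⟩

end Aux

section Main

variable {d : ℕ}

lemma shuffle_aux (Γ : ℝ → Fin d → ℝ)
    (hΓ : ∀ l : Fin d, ContDiff ℝ 1 (fun v => Γ v l)) :
    ∀ (N n₁ n₂ : ℕ), n₁ + n₂ = N → ∀ (i j : ℕ → Fin d) (s t : ℝ),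
    iter Γ n₁ i s t * iter Γ n₂ j s t =
      ∑ S ∈ Finset.powersetCard n₁ (Finset.range (n₁ + n₂)),
        iter Γ (n₁ + n₂) (shuffleWord i j S) s t := by
  intro N
  induction N using Nat.strong_induction_on with
  | _ N IH =>
  intro n₁ n₂ hN i j s t
  match n₁, n₂ with
  | 0, n₂ =>
    simp only [Finset.powersetCard_zero, Finset.sum_singleton, zero_add]
    show (1 : ℝ) * iter Γ n₂ j s t = iter Γ n₂ (shuffleWord i j ∅) s t
    rw [one_mul]
    exact iter_congr n₂ (fun k _ => by simp [shuffleWord]) s t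
  | n₁ + 1, 0 =>
    have hps : Finset.powersetCard (n₁ + 1) (Finset.range (n₁ + 1 + 0))
        = {Finset.range (n₁ + 1)} := by
      have h := Finset.powersetCard_self (Finset.range (n₁ + 1))
      rw [Finset.card_range] at h
      simpa using h
    rw [hps, Finset.sum_singleton]
    show iter Γ (n₁+1) i s t * 1 = _
    rw [mul_one]
    refine iter_congr (n₁ + 1 + 0) (fun k hk => ?_) s t
    have hkmem : k ∈ Finset.range (n₁ + 1) := Finset.mem_range.mpr (by omega)
    simp only [shuffleWord, hkmem, if_true]
    congr 1
    rw [Finset.filter_true_of_mem (fun x hx => Finset.mem_range.mpr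
      (lt_trans (Finset.mem_range.mp hx) (Finset.mem_range.mp hkmem))), Finset.card_range]
  | a + 1, b + 1 =>
    -- main inductive step
    have hE : a + 1 + (b + 1) = a + b + 1 + 1 := by omega
    rw [hE]
    set F : ℝ → ℝ := fun t => iter Γ (a + 1) i s t * iter Γ (b + 1) j s t -
      ∑ S ∈ Finset.powersetCard (a + 1) (Finset.range (a + b + 1 + 1)),
        iter Γ (a + b + 1 + 1) (shuffleWord i j S) s t with hF
    have hderiv : ∀ u : ℝ, HasDerivAt F 0 u := by
      intro u
      have hA := iter_hasDerivAt hΓ a i s u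
      have hB := iter_hasDerivAt hΓ b j s u
      have hsum : HasDerivAt
          (fun t => ∑ S ∈ Finset.powersetCard (a + 1) (Finset.range (a + b + 1 + 1)),
            iter Γ (a + b + 1 + 1) (shuffleWord i j S) s t)
          (∑ S ∈ Finset.powersetCard (a + 1) (Finset.range (a + b + 1 + 1)),
            deriv (fun v => Γ v (shuffleWord i j S 0)) u *
              iter Γ (a + b + 1) (fun k => shuffleWord i j S (k + 1)) s u) u :=
        HasDerivAt.fun_sum (fun S _ => iter_hasDerivAt hΓ (a + b + 1) (shuffleWord i j S) s u)
      -- compute the sum of derivatives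
      have hsplit :
          (∑ S ∈ Finset.powersetCard (a + 1) (Finset.range (a + b + 1 + 1)),
            deriv (fun v => Γ v (shuffleWord i j S 0)) u *
              iter Γ (a + b + 1) (fun k => shuffleWord i j S (k + 1)) s u)
          = deriv (fun v => Γ v (i 0)) u *
              (iter Γ a (fun k => i (k + 1)) s u * iter Γ (b + 1) j s u)
            + deriv (fun v => Γ v (j 0)) u *
              (iter Γ (a + 1) i s u * iter Γ b (fun k => j (k + 1)) s u) := by
        rw [← Finset.sum_filter_add_sum_filter_not _ (fun S => (0 : ℕ) ∈ S)]
        have e1 :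
            (∑ S ∈ (Finset.powersetCard (a + 1) (Finset.range (a + b + 1 + 1))).filter
                (fun S => (0 : ℕ) ∈ S),
              deriv (fun v => Γ v (shuffleWord i j S 0)) u *
                iter Γ (a + b + 1) (fun k => shuffleWord i j S (k + 1)) s u)
            = ∑ T ∈ Finset.powersetCard a (Finset.range (a + b + 1)),
                deriv (fun v => Γ v (i 0)) u *
                  iter Γ (a + b + 1)
                    (shuffleWord (fun m => i (m + 1)) j T) s u := by
          refine Finset.sum_nbij' (fun S => (S.erase 0).image (· - 1))
            (fun T => insert 0 (T.image (· + 1))) ?_ ?_ ?_ ?_ ?_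
          · intro S hS
            simp only [Finset.mem_filter, Finset.mem_powersetCard] at hS
            obtain ⟨⟨hSsub, hScard⟩, hS0⟩ := hS
            rw [Finset.mem_powersetCard]
            have hinj : Set.InjOn (· - 1) (S.erase 0) := by
              intro x hx y hy hxy
              simp only [Finset.coe_erase, Set.mem_diff, Finset.mem_coe,
                Set.mem_singleton_iff] at hx hy
              simp only [] at hxy
              omega
            refine ⟨fun x hx => ?_, ?_⟩
            · rw [mem_shiftDown_of_mem hS0] at hx
              have := Finset.mem_range.mp (hSsub hx)
              exact Finset.mem_range.mpr (by omega)
            · rw [Finset.card_image_of_injOn hinj, Finset.card_erase_of_mem hS0, hScard]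
              omega
          · intro T hT
            rw [Finset.mem_powersetCard] at hT
            obtain ⟨hTsub, hTcard⟩ := hT
            simp only [Finset.mem_filter, Finset.mem_powersetCard]
            refine ⟨⟨?_, ?_⟩, Finset.mem_insert_self 0 _⟩
            · intro x hx
              rcases Finset.mem_insert.mp hx with h | h
              · exact Finset.mem_range.mpr (by omega)
              · obtain ⟨m, hm, rfl⟩ := Finset.mem_image.mp h
                have := Finset.mem_range.mp (hTsub hm)
                exact Finset.mem_range.mpr (by omega)
            · have hinj : Function.Injective (· + 1 : ℕ → ℕ) := by
                intro x y hxy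
                simp only [] at hxy
                omega
              rw [Finset.card_insert_of_notMem (by simp),
                Finset.card_image_of_injective _ hinj, hTcard]
          · intro S hS
            simp only [Finset.mem_filter, Finset.mem_powersetCard] at hS
            obtain ⟨⟨hSsub, hScard⟩, hS0⟩ := hS
            ext x
            simp only [Finset.mem_insert, Finset.mem_image, Finset.mem_erase]
            constructor
            · rintro (rfl | ⟨m, ⟨m', ⟨hm'0, hm'S⟩, rfl⟩, rfl⟩)
              · exact hS0
              · have h : m' - 1 + 1 = m' := by omega
                rwa [h]
            · intro hx
              by_cases hx0 : x = 0
              · exact Or.inl hx0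
              · exact Or.inr ⟨x - 1, ⟨x, ⟨hx0, hx⟩, rfl⟩, by omega⟩
          · intro T hT
            rw [Finset.mem_powersetCard] at hT
            ext x
            simp only [Finset.mem_image, Finset.mem_erase, Finset.mem_insert]
            constructor
            · rintro ⟨m, ⟨hm0, hm⟩, rfl⟩
              rcases hm with rfl | ⟨m', hm', rfl⟩
              · exact absurd rfl hm0
              · have h : m' + 1 - 1 = m' := by omega
                rwa [h]
            · intro hx
              exact ⟨x + 1, ⟨by omega, Or.inr ⟨x, hx, rfl⟩⟩, by omega⟩
          · intro S hS
            simp only [Finset.mem_filter, Finset.mem_powersetCard] at hS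
            obtain ⟨⟨hSsub, hScard⟩, hS0⟩ := hS
            rw [shuffleWord_zero_mem hS0]
            congr 1
            exact iter_congr (a + b + 1)
              (fun k _ => shuffleWord_succ_mem hS0 (mem_shiftDown_of_mem hS0) k) s u
        have e2 :
            (∑ S ∈ (Finset.powersetCard (a + 1) (Finset.range (a + b + 1 + 1))).filter
                (fun S => (0 : ℕ) ∉ S),
              deriv (fun v => Γ v (shuffleWord i j S 0)) u *
                iter Γ (a + b + 1) (fun k => shuffleWord i j S (k + 1)) s u)
            = ∑ T ∈ Finset.powersetCard (a + 1) (Finset.range (a + b + 1)),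
                deriv (fun v => Γ v (j 0)) u *
                  iter Γ (a + b + 1)
                    (shuffleWord i (fun m => j (m + 1)) T) s u := by
          refine Finset.sum_nbij' (fun S => S.image (· - 1))
            (fun T => T.image (· + 1)) ?_ ?_ ?_ ?_ ?_
          · intro S hS
            simp only [Finset.mem_filter, Finset.mem_powersetCard] at hS
            obtain ⟨⟨hSsub, hScard⟩, hS0⟩ := hS
            rw [Finset.mem_powersetCard]
            have hinj : Set.InjOn (· - 1) S := by
              intro x hx y hy hxy
              simp only [Finset.mem_coe] at hx hy
              have hx0 : x ≠ 0 := fun h => hS0 (h ▸ hx)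
              have hy0 : y ≠ 0 := fun h => hS0 (h ▸ hy)
              simp only [] at hxy
              omega
            refine ⟨fun x hx => ?_, ?_⟩
            · rw [mem_shiftDown_of_not_mem hS0] at hx
              have := Finset.mem_range.mp (hSsub hx)
              exact Finset.mem_range.mpr (by omega)
            · rw [Finset.card_image_of_injOn hinj, hScard]
          · intro T hT
            rw [Finset.mem_powersetCard] at hT
            obtain ⟨hTsub, hTcard⟩ := hT
            simp only [Finset.mem_filter, Finset.mem_powersetCard]
            have hinj : Function.Injective (· + 1 : ℕ → ℕ) := by
              intro x y hxy
              simp only [] at hxy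
              omega
            refine ⟨⟨?_, ?_⟩, by simp⟩
            · intro x hx
              obtain ⟨m, hm, rfl⟩ := Finset.mem_image.mp hx
              have := Finset.mem_range.mp (hTsub hm)
              exact Finset.mem_range.mpr (by omega)
            · rw [Finset.card_image_of_injective _ hinj, hTcard]
          · intro S hS
            simp only [Finset.mem_filter, Finset.mem_powersetCard] at hS
            obtain ⟨⟨hSsub, hScard⟩, hS0⟩ := hS
            ext x
            simp only [Finset.mem_image]
            constructor
            · rintro ⟨m, ⟨m', hm', rfl⟩, rfl⟩
              have hm0 : m' ≠ 0 := fun h => hS0 (h ▸ hm')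
              have h : m' - 1 + 1 = m' := by omega
              rwa [h]
            · intro hx
              have hx0 : x ≠ 0 := fun h => hS0 (h ▸ hx)
              exact ⟨x - 1, ⟨x, hx, rfl⟩, by omega⟩
          · intro T hT
            ext x
            simp only [Finset.mem_image]
            constructor
            · rintro ⟨m, ⟨m', hm', rfl⟩, rfl⟩
              have h : m' + 1 - 1 = m' := by omega
              rwa [h]
            · intro hx
              exact ⟨x + 1, ⟨x, hx, rfl⟩, by omega⟩
          · intro S hS
            simp only [Finset.mem_filter, Finset.mem_powersetCard] at hS
            obtain ⟨⟨hSsub, hScard⟩, hS0⟩ := hS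
            rw [shuffleWord_zero_not_mem hS0]
            congr 1
            exact iter_congr (a + b + 1)
              (fun k _ => shuffleWord_succ_not_mem hS0 (mem_shiftDown_of_not_mem hS0) k) s u
        have IH1 := IH (a + (b + 1)) (by omega) a (b + 1) rfl (fun m => i (m + 1)) j s u
        have IH2 := IH (a + 1 + b) (by omega) (a + 1) b rfl i (fun m => j (m + 1)) s u
        have hab1 : a + (b + 1) = a + b + 1 := by omega
        have hab2 : a + 1 + b = a + b + 1 := by omega
        rw [hab1] at IH1
        rw [hab2] at IH2
        rw [e1, e2, ← Finset.mul_sum, ← Finset.mul_sum, ← IH1, ← IH2]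
      have hd : HasDerivAt F
          ((deriv (fun v => Γ v (i 0)) u * iter Γ a (fun k => i (k + 1)) s u) *
              iter Γ (b + 1) j s u
            + iter Γ (a + 1) i s u *
              (deriv (fun v => Γ v (j 0)) u * iter Γ b (fun k => j (k + 1)) s u)
            - (deriv (fun v => Γ v (i 0)) u *
                (iter Γ a (fun k => i (k + 1)) s u * iter Γ (b + 1) j s u)
              + deriv (fun v => Γ v (j 0)) u *
                (iter Γ (a + 1) i s u * iter Γ b (fun k => j (k + 1)) s u))) u := by
        rw [hF]
        refine HasDerivAt.sub (hA.mul hB) ?_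
        rw [← hsplit]
        exact hsum
      convert hd using 1
      ring
    have hconst := is_const_of_deriv_eq_zero
      (fun x => (hderiv x).differentiableAt) (fun x => (hderiv x).deriv)
    have hFs : F s = 0 := by
      rw [hF]
      simp only []
      have h1 : iter Γ (a + 1) i s s = 0 := iter_self_eq_zero a i s
      have h2 : ∀ S ∈ Finset.powersetCard (a + 1) (Finset.range (a + b + 1 + 1)),
          iter Γ (a + b + 1 + 1) (shuffleWord i j S) s s = 0 :=
        fun S _ => iter_self_eq_zero (a + b + 1) _ s
      rw [h1, zero_mul, Finset.sum_congr rfl h2, Finset.sum_const_zero, sub_zero]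
    have hFt := hconst t s
    rw [hFs] at hFt
    have hF0 : F t = 0 := hFt
    rw [hF] at hF0
    simp only [] at hF0
    linarith [hF0]

end Main

/-- Shuffle identity for iterated integrals of a C¹ path:
`Γ^{n₁}_{ts}(i) · Γ^{n₂}_{ts}(j) = Σ_{k ∈ Sh(i,j)} Γ^{n₁+n₂}_{ts}(k)`,
the shuffles being indexed by the subsets `S ⊆ {0,…,n₁+n₂−1}` of cardinality `n₁`. -/
theorem shuffle_identity {d : ℕ} (Γ : ℝ → Fin d → ℝ)
    (hΓ : ∀ l : Fin d, ContDiff ℝ 1 (fun v => Γ v l))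
    (n₁ n₂ : ℕ) (hn₁ : 1 ≤ n₁) (hn₂ : 1 ≤ n₂) (i j : ℕ → Fin d) (s t : ℝ) :
    iter Γ n₁ i s t * iter Γ n₂ j s t =
      ∑ S ∈ Finset.powersetCard n₁ (Finset.range (n₁ + n₂)),
        iter Γ (n₁ + n₂) (shuffleWord i j S) s t :=
  shuffle_aux Γ hΓ (n₁ + n₂) n₁ n₂ rfl i j s t
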